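/- The set of ST-antivalid inferences equals the relative sum of the K3-antivalid inferences and the LP-antivalid inferences: 𝕊𝕋⁻ = 𝕂₃⁻ † 𝕃ℙ⁻. That is, an inference Γ ⇒ Δ is ST-antivalid if and only if for every formula φ, either Γ ⇒ {φ} is K3-antivalid or {φ} ⇒ Δ is LP-antivalid. -/
import Mathlib


/-- Propositional formulas over a countably infinite set of variables,
with constants ⊤, ⊥, λ and connectives ¬, ∨, ∧. -/
inductive Fm : Type
  | var : ℕ → Fm
  | top : Fm
  | bot : Fm
  | lam : Fm
  | neg : Fm → Fm
  | disj : Fm → Fm → Fm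
  | conj : Fm → Fm → Fm
  deriving DecidableEq

/-- A function `v : Var → ℚ` is an SK-valuation if it takes values in {0, 1/2, 1}. -/
def SK (v : ℕ → ℚ) : Prop := ∀ p : ℕ, v p = 0 ∨ v p = 1/2 ∨ v p = 1

/-- Extension of a valuation to all formulas by the Strong Kleene scheme. -/
def eval (v : ℕ → ℚ) : Fm → ℚ
  | .var p => v p
  | .top => 1
  | .bot => 0
  | .lam => 1/2
  | .neg φ => 1 - eval v φ
  | .disj φ ψ => max (eval v φ) (eval v ψ)
  | .conj φ ψ => min (eval v φ) (eval v ψ)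

/-- An inference is a pair of finite sets of formulas. -/
abbrev Inference := Finset Fm × Finset Fm

def K3Valid (Γ Δ : Finset Fm) : Prop :=
  ∀ v : ℕ → ℚ, SK v → (∀ γ ∈ Γ, eval v γ = 1) → ∃ δ ∈ Δ, eval v δ = 1

def LPValid (Γ Δ : Finset Fm) : Prop :=
  ∀ v : ℕ → ℚ, SK v → (∀ γ ∈ Γ, eval v γ ≠ 0) → ∃ δ ∈ Δ, eval v δ ≠ 0

def STValid (Γ Δ : Finset Fm) : Prop :=
  ∀ v : ℕ → ℚ, SK v → (∀ γ ∈ Γ, eval v γ = 1) → ∃ δ ∈ Δ, eval v δ ≠ 0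

def TSValid (Γ Δ : Finset Fm) : Prop :=
  ∀ v : ℕ → ℚ, SK v → (∀ γ ∈ Γ, eval v γ ≠ 0) → ∃ δ ∈ Δ, eval v δ = 1

def K3plus : Set Inference := {I | K3Valid I.1 I.2}
def LPplus : Set Inference := {I | LPValid I.1 I.2}
def STplus : Set Inference := {I | STValid I.1 I.2}
def TSplus : Set Inference := {I | TSValid I.1 I.2}

/-- Relative product: the middle term is a single formula. -/
def RelProd (R S : Set Inference) : Set Inference :=
  {I | ∃ φ : Fm, (I.1, ({φ} : Finset Fm)) ∈ R ∧ (({φ} : Finset Fm), I.2) ∈ S}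

/-- Relative sum: for every single formula, one of the two components holds. -/
def RelSum (R S : Set Inference) : Set Inference :=
  {I | ∀ φ : Fm, (I.1, ({φ} : Finset Fm)) ∈ R ∨ (({φ} : Finset Fm), I.2) ∈ S}

def K3Antivalid (Γ Δ : Finset Fm) : Prop :=
  ∀ v : ℕ → ℚ, SK v → (∀ γ ∈ Γ, eval v γ ≠ 1) → ∃ δ ∈ Δ, eval v δ ≠ 1

def LPAntivalid (Γ Δ : Finset Fm) : Prop :=
  ∀ v : ℕ → ℚ, SK v → (∀ γ ∈ Γ, eval v γ = 0) → ∃ δ ∈ Δ, eval v δ = 0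

def STAntivalid (Γ Δ : Finset Fm) : Prop :=
  ∀ v : ℕ → ℚ, SK v → (∀ γ ∈ Γ, eval v γ ≠ 1) → ∃ δ ∈ Δ, eval v δ = 0

def TSAntivalid (Γ Δ : Finset Fm) : Prop :=
  ∀ v : ℕ → ℚ, SK v → (∀ γ ∈ Γ, eval v γ = 0) → ∃ δ ∈ Δ, eval v δ ≠ 1

def K3minus : Set Inference := {I | K3Antivalid I.1 I.2}
def LPminus : Set Inference := {I | LPAntivalid I.1 I.2}
def STminus : Set Inference := {I | STAntivalid I.1 I.2}
def TSminus : Set Inference := {I | TSAntivalid I.1 I.2}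

/-- Variables occurring in a formula. -/
def fmVars : Fm → Finset ℕ
  | .var p => {p}
  | .top => ∅
  | .bot => ∅
  | .lam => ∅
  | .neg φ => fmVars φ
  | .disj φ ψ => fmVars φ ∪ fmVars ψ
  | .conj φ ψ => fmVars φ ∪ fmVars ψ

lemma eval_congr {v w : ℕ → ℚ} (φ : Fm) (h : ∀ p ∈ fmVars φ, v p = w p) :
    eval v φ = eval w φ := by
  induction φ with
  | var p => exact h p (by simp [fmVars])
  | top => rfl
  | bot => rfl
  | lam => rfl
  | neg φ ih => simp [eval, ih (fun p hp => h p hp)]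
  | disj φ ψ ih1 ih2 =>
      simp [eval, ih1 (fun p hp => h p (by simp [fmVars, hp])),
        ih2 (fun p hp => h p (by simp [fmVars, hp]))]
  | conj φ ψ ih1 ih2 =>
      simp [eval, ih1 (fun p hp => h p (by simp [fmVars, hp])),
        ih2 (fun p hp => h p (by simp [fmVars, hp]))]

lemma eval_mem {v : ℕ → ℚ} (hv : SK v) (φ : Fm) :
    eval v φ = 0 ∨ eval v φ = 1/2 ∨ eval v φ = 1 := by
  induction φ with
  | var p => exact hv p
  | top => simp [eval]
  | bot => simp [eval]
  | lam => simp [eval]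
  | neg φ ih => rcases ih with h | h | h <;> simp [eval, h] <;> norm_num
  | disj φ ψ ih1 ih2 =>
      rcases ih1 with h | h | h <;> rcases ih2 with g | g | g <;>
        simp [eval, h, g] <;> norm_num
  | conj φ ψ ih1 ih2 =>
      rcases ih1 with h | h | h <;> rcases ih2 with g | g | g <;>
        simp [eval, h, g] <;> norm_num

/-- Informational meet of two valuations. -/
noncomputable def merge (v1 v2 : ℕ → ℚ) : ℕ → ℚ :=
  fun p => if v1 p = v2 p then v1 p else 1/2

lemma merge_SK {v1 v2 : ℕ → ℚ} (h1 : SK v1) : SK (merge v1 v2) := by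
  intro p
  unfold merge
  split
  · exact h1 p
  · right; left; rfl

lemma merge_spec {v1 v2 : ℕ → ℚ} (h1 : SK v1) (h2 : SK v2) (φ : Fm) :
    (eval (merge v1 v2) φ = 1 → eval v1 φ = 1 ∧ eval v2 φ = 1) ∧
    (eval (merge v1 v2) φ = 0 → eval v1 φ = 0 ∧ eval v2 φ = 0) := by
  induction φ with
  | var p =>
      constructor <;> intro h <;>
      · simp only [eval, merge] at h ⊢
        split at h
        · rename_i he
          exact ⟨h, he ▸ h⟩
        · norm_num at h
  | top => simp [eval]
  | bot => simp [eval]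
  | lam => simp [eval]
  | neg φ ih =>
      obtain ⟨ih1, ih0⟩ := ih
      constructor <;> intro h <;> simp only [eval] at h ⊢
      · have := ih0 (by linarith)
        constructor <;> linarith [this.1, this.2]
      · have := ih1 (by linarith)
        constructor <;> linarith [this.1, this.2]
  | disj φ ψ ih1 ih2 =>
      have m1 := eval_mem h1 φ
      have m2 := eval_mem h2 φ
      have n1 := eval_mem h1 ψ
      have n2 := eval_mem h2 ψ
      have mw1 := eval_mem (merge_SK h1 (v2 := v2)) φ
      have mw2 := eval_mem (merge_SK h1 (v2 := v2)) ψ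
      constructor <;> intro h <;> simp only [eval] at h ⊢
      · rcases max_cases (eval (merge v1 v2) φ) (eval (merge v1 v2) ψ) with ⟨he, _⟩ | ⟨he, _⟩
        · have := ih1.1 (he ▸ h)
          constructor
          · rcases m1 with a|a|a <;> rcases n1 with b|b|b <;>
              simp [this.1] at * <;> simp_all <;> norm_num [max_def] <;> linarith
          · rcases m2 with a|a|a <;> rcases n2 with b|b|b <;>
              simp [this.2] at * <;> simp_all <;> norm_num [max_def] <;> linarith
        · have := ih2.1 (he ▸ h)
          constructor
          · rcases m1 with a|a|a <;> rcases n1 with b|b|b <;>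
              simp [this.1] at * <;> simp_all <;> norm_num [max_def] <;> linarith
          · rcases m2 with a|a|a <;> rcases n2 with b|b|b <;>
              simp [this.2] at * <;> simp_all <;> norm_num [max_def] <;> linarith
      · have hφ : eval (merge v1 v2) φ = 0 := by
          rcases mw1 with a|a|a <;> rcases mw2 with b|b|b <;>
            simp [a, b] at h ⊢ <;> norm_num [max_def] at h
        have hψ : eval (merge v1 v2) ψ = 0 := by
          rcases mw1 with a|a|a <;> rcases mw2 with b|b|b <;>
            simp [a, b] at h ⊢ <;> norm_num [max_def] at h
        have A := ih1.2 hφ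
        have B := ih2.2 hψ
        constructor <;> simp [A.1, A.2, B.1, B.2]
  | conj φ ψ ih1 ih2 =>
      have m1 := eval_mem h1 φ
      have m2 := eval_mem h2 φ
      have n1 := eval_mem h1 ψ
      have n2 := eval_mem h2 ψ
      have mw1 := eval_mem (merge_SK h1 (v2 := v2)) φ
      have mw2 := eval_mem (merge_SK h1 (v2 := v2)) ψ
      constructor <;> intro h <;> simp only [eval] at h ⊢
      · have hφ : eval (merge v1 v2) φ = 1 := by
          rcases mw1 with a|a|a <;> rcases mw2 with b|b|b <;>
            simp [a, b] at h ⊢ <;> norm_num [min_def] at h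
        have hψ : eval (merge v1 v2) ψ = 1 := by
          rcases mw1 with a|a|a <;> rcases mw2 with b|b|b <;>
            simp [a, b] at h ⊢ <;> norm_num [min_def] at h
        have A := ih1.1 hφ
        have B := ih2.1 hψ
        constructor <;> simp [A.1, A.2, B.1, B.2]
      · rcases min_cases (eval (merge v1 v2) φ) (eval (merge v1 v2) ψ) with ⟨he, _⟩ | ⟨he, _⟩
        · have := ih1.2 (he ▸ h)
          constructor
          · rcases m1 with a|a|a <;> rcases n1 with b|b|b <;>
              simp [this.1] at * <;> simp_all <;> norm_num [min_def] <;> linarith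
          · rcases m2 with a|a|a <;> rcases n2 with b|b|b <;>
              simp [this.2] at * <;> simp_all <;> norm_num [min_def] <;> linarith
        · have := ih2.2 (he ▸ h)
          constructor
          · rcases m1 with a|a|a <;> rcases n1 with b|b|b <;>
              simp [this.1] at * <;> simp_all <;> norm_num [min_def] <;> linarith
          · rcases m2 with a|a|a <;> rcases n2 with b|b|b <;>
              simp [this.2] at * <;> simp_all <;> norm_num [min_def] <;> linarith

theorem STminus_eq_relSum_K3minus_LPminus : STminus = RelSum K3minus LPminus := by
  ext I
  obtain ⟨Γ, Δ⟩ := I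
  constructor
  · -- ST-antivalid ⇒ relative sum
    intro hST φ
    by_cases hK : K3Antivalid Γ {φ}
    · left; exact hK
    · right
      rw [K3Antivalid] at hK
      push_neg at hK
      obtain ⟨v1, hv1, hΓ1, hφ1⟩ := hK
      have hφ1 : eval v1 φ = 1 := hφ1 φ (Finset.mem_singleton_self φ)
      intro v2 hv2 hφ2
      have hφ2 : eval v2 φ = 0 := hφ2 φ (Finset.mem_singleton_self φ)
      by_contra hΔ
      push_neg at hΔ
      -- merge valuation contradicts ST-antivalidity
      obtain ⟨δ, hδΔ, hδ0⟩ := hST (merge v1 v2) (merge_SK hv1)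
        (fun γ hγ h1 => hΓ1 γ hγ ((merge_spec hv1 hv2 γ).1 h1).1)
      exact hΔ δ hδΔ (((merge_spec hv1 hv2 δ).2 hδ0).2)
  · -- relative sum ⇒ ST-antivalid
    intro hRS v hv hΓ
    -- pick a fresh variable q
    set q : ℕ := ((Γ ∪ Δ).sup fmVars).sup id + 1 with hq
    have hfresh : ∀ ψ ∈ Γ ∪ Δ, q ∉ fmVars ψ := by
      intro ψ hψ hmem
      have h1 : fmVars ψ ⊆ (Γ ∪ Δ).sup fmVars := Finset.le_sup hψ
      have h2 : q ≤ ((Γ ∪ Δ).sup fmVars).sup id := Finset.le_sup (f := id) (h1 hmem)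
      omega
    rcases hRS (Fm.var q) with hK | hL
    · -- K3 branch is impossible: evaluate at v updated with q ↦ 1
      exfalso
      set v1 := Function.update v q 1 with hv1def
      have hv1 : SK v1 := by
        intro p
        by_cases hp : p = q
        · subst hp; right; right; simp [hv1def]
        · simpa [hv1def, Function.update, hp] using hv p
      obtain ⟨δ, hδ, hδ1⟩ := hK v1 hv1 (by
        intro γ hγ
        have : eval v1 γ = eval v γ := eval_congr γ (by
          intro p hp
          have : p ≠ q := fun h => hfresh γ (Finset.mem_union_left _ hγ) (h ▸ hp)
          simp [hv1def, Function.update, this])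
        rw [this]; exact hΓ γ hγ)
      rw [Finset.mem_singleton] at hδ
      subst hδ
      exact hδ1 (by simp [eval, hv1def])
    · -- LP branch: evaluate at v updated with q ↦ 0
      set v0 := Function.update v q 0 with hv0def
      have hv0 : SK v0 := by
        intro p
        by_cases hp : p = q
        · subst hp; left; simp [hv0def]
        · simpa [hv0def, Function.update, hp] using hv p
      obtain ⟨δ, hδ, hδ0⟩ := hL v0 hv0 (by
        intro γ hγ
        rw [Finset.mem_singleton] at hγ
        subst hγ
        simp [eval, hv0def])
      refine ⟨δ, hδ, ?_⟩
      have : eval v δ = eval v0 δ := eval_congr δ (by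
        intro p hp
        have : p ≠ q := fun h => hfresh δ (Finset.mem_union_right _ hδ) (h ▸ hp)
        simp [hv0def, Function.update, this])
      rw [this]; exact hδ0
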